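/- Let K be the operator on bounded measurable functions f : [0,1] → ℝ given by Kf(s) := (2/(2β+1))·[∫_s^1 x^{2β}·f(s/x) dx + ∫_0^s (1−x)^{2β}·f((1−s)/(1−x)) dx] + 2·B(β+1, β+1)·h(s)²/(β+1). If f : [0,1] → ℝ is bounded and measurable and satisfies Kf(s) = f(s) for every s ∈ [0,1], then f(s) = c₂·(s(1−s))^β for every s ∈ [0,1], where c₂ := 2·B(β+1, β+1)·(2β+1)/(3(1−β)). In other words, the integral equation for the second moment of the limit process has a unique bounded measurable solution. -/

import Mathlib

open MeasureTheory Real Set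

/-- The exponent `β = (√17 - 3)/2`, the positive root of `(β+1)(β+2) = 4`. -/
noncomputable def β : ℝ := (Real.sqrt 17 - 3) / 2

/-- The scaling function `h(s) = (s(1-s))^{β/2}`. -/
noncomputable def h (s : ℝ) : ℝ := (s * (1 - s)) ^ (β / 2)

/-- The Beta function `B(a,b) = ∫₀¹ t^{a-1}(1-t)^{b-1} dt`. -/
noncomputable def Bfun (a b : ℝ) : ℝ := ∫ t in (0:ℝ)..1, t ^ (a - 1) * (1 - t) ^ (b - 1)

/-- The second-moment integral operator `K`. -/
noncomputable def K (f : ℝ → ℝ) (s : ℝ) : ℝ :=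
  (2 / (2 * β + 1)) *
      ((∫ x in s..1, x ^ (2 * β) * f (s / x)) +
        ∫ x in (0:ℝ)..s, (1 - x) ^ (2 * β) * f ((1 - s) / (1 - x)))
    + 2 * Bfun (β + 1) (β + 1) * (h s) ^ 2 / (β + 1)

/-- The constant `c₂ = 2 B(β+1,β+1)(2β+1)/(3(1-β))`. -/
noncomputable def c₂ : ℝ := 2 * Bfun (β + 1) (β + 1) * (2 * β + 1) / (3 * (1 - β))

/- ## auxiliary lemmas -/

lemma sqrt17_gt : (4:ℝ) < Real.sqrt 17 := by
  nlinarith [Real.sq_sqrt (by norm_num : (17:ℝ) ≥ 0), Real.sqrt_nonneg 17]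

lemma sqrt17_lt : Real.sqrt 17 < 5 := by
  nlinarith [Real.sq_sqrt (by norm_num : (17:ℝ) ≥ 0), Real.sqrt_nonneg 17]

lemma beta_half : (1:ℝ)/2 < β := by unfold β; linarith [sqrt17_gt]
lemma beta_lt_one : β < 1 := by unfold β; linarith [sqrt17_lt]
lemma beta_pos : 0 < β := by linarith [beta_half]
lemma beta_sq : β ^ 2 + 3 * β = 2 := by
  unfold β; nlinarith [Real.sq_sqrt (by norm_num : (17:ℝ) ≥ 0)]
lemma tb_pos : 0 < 2 * β + 1 := by linarith [beta_pos]
lemma tb_gt : 2 < 2 * β + 1 := by linarith [beta_half]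

/-- bounded measurable functions are interval integrable -/
lemma intInt_of_bdd {F : ℝ → ℝ} (hF : Measurable F) {C a b : ℝ}
    (h : ∀ x ∈ Set.uIcc a b, |F x| ≤ C) : IntervalIntegrable F volume a b := by
  rw [intervalIntegrable_iff]
  apply MeasureTheory.Measure.integrableOn_of_bounded
    (((measure_mono Set.uIoc_subset_uIcc).trans_lt measure_Icc_lt_top).ne)
    hF.aestronglyMeasurable
  exact ae_restrict_of_forall_mem measurableSet_uIoc
      (fun x hx => by simpa using h x (Set.uIoc_subset_uIcc hx))

/-- the key pointwise identity for the first integrand -/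
lemma key1 (s x : ℝ) (hs0 : 0 ≤ s) (hx : x ∈ Set.Icc s 1) :
    x ^ (2*β) * ((s/x) * (1 - s/x)) ^ β = s ^ β * (x - s) ^ β := by
  rcases eq_or_lt_of_le (hs0.trans hx.1) with h0 | h0
  · have hx0 : x = 0 := h0.symm
    have hs' : s = 0 := le_antisymm (hx0 ▸ hx.1) hs0
    rw [hx0, hs']
    rw [Real.zero_rpow (ne_of_gt (by linarith [beta_pos]) : (2*β) ≠ 0),
      Real.zero_rpow (ne_of_gt beta_pos)]
    ring
  · have hxne : x ≠ 0 := h0.ne'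
    have hxs : 0 ≤ x - s := by linarith [hx.1]
    have h1 : (s/x) * (1 - s/x) = s * (x-s) / x^2 := by
      rw [one_sub_div hxne, div_mul_div_comm, sq]
    have h2 : (x^2 : ℝ) ^ β = x ^ (2*β) := by
      rw [← Real.rpow_natCast x 2, ← Real.rpow_mul h0.le]; norm_num
    have hxb : (0:ℝ) < x ^ (2*β) := Real.rpow_pos_of_pos h0 _
    rw [h1, Real.div_rpow (by positivity) (by positivity),
        Real.mul_rpow hs0 hxs, h2]
    field_simp

/-- `∫ x in 0..c, x^β` -/
lemma int_rpow0 (c : ℝ) : ∫ x in (0:ℝ)..c, x ^ β = c ^ (β+1) / (β+1) := by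
  rw [integral_rpow (Or.inl (by linarith [beta_pos]))]
  rw [Real.zero_rpow (ne_of_gt (by linarith [beta_pos]) : β + 1 ≠ 0)]
  ring

/-- the first model integral -/
lemma int1 (s : ℝ) (hs : s ∈ Set.Icc (0:ℝ) 1) :
    ∫ x in s..1, x ^ (2*β) * ((s/x) * (1 - s/x)) ^ β
      = s ^ β * ((1-s) ^ (β+1) / (β+1)) := by
  rw [intervalIntegral.integral_congr (g := fun x => s ^ β * (x - s) ^ β)
      (fun x hx => key1 s x hs.1 (by rwa [Set.uIcc_of_le hs.2] at hx))]
  rw [intervalIntegral.integral_const_mul]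
  congr 1
  have hsub : ∫ x in s..1, (x - s) ^ β = ∫ x in (0:ℝ)..(1-s), x ^ β := by
    have := intervalIntegral.integral_comp_sub_right (a := s) (b := 1) (fun x => x ^ β) s
    simpa using this
  rw [hsub, int_rpow0]

/-- substitution `x ↦ 1 - x` for the second integral -/
lemma subst2 (G : ℝ → ℝ) (s : ℝ) :
    ∫ x in (0:ℝ)..s, G (1 - x) = ∫ x in (1-s)..1, G x := by
  have := intervalIntegral.integral_comp_sub_left (a := 0) (b := s) G 1
  simpa using this


/-- `h s ^ 2 = (s(1-s))^β` on `[0,1]` -/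
lemma h_sq (s : ℝ) (hs : s ∈ Set.Icc (0:ℝ) 1) :
    (h s) ^ 2 = (s * (1 - s)) ^ β := by
  have h0 : 0 ≤ s * (1 - s) := mul_nonneg hs.1 (by linarith [hs.2])
  rw [h, ← Real.rpow_natCast ((s * (1-s)) ^ (β/2)) 2, ← Real.rpow_mul h0]
  norm_num

/-- scalar fixed-point identity -/
lemma fixed_const :
    (2 / (2*β+1)) * (c₂ / (β+1)) + 2 * Bfun (β+1) (β+1) / (β+1) = c₂ := by
  have h1 : (2*β+1) ≠ 0 := ne_of_gt tb_pos
  have h2 : (β+1) ≠ 0 := ne_of_gt (by linarith [beta_pos])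
  have h3 : (3*(1-β)) ≠ 0 := ne_of_gt (by linarith [beta_lt_one])
  rw [c₂]
  have h4 : (1-β) ≠ 0 := ne_of_gt (by linarith [beta_lt_one])
  field_simp
  linear_combination (-2 * Bfun (β+1) (β+1)) * beta_sq

lemma rpow_succ {c : ℝ} (hc : 0 ≤ c) : c ^ (β+1) = c ^ β * c := by
  rcases eq_or_lt_of_le hc with h0 | h0
  · rw [← h0, Real.zero_rpow (ne_of_gt (by linarith [beta_pos]) : β + 1 ≠ 0),
      Real.zero_rpow (ne_of_gt beta_pos), mul_zero]
  · exact Real.rpow_add_one h0.ne' β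

lemma meas1 (F : ℝ → ℝ) (hF : Measurable F) (s : ℝ) :
    Measurable (fun x : ℝ => x ^ (2*β) * F (s / x)) := by
  fun_prop

lemma meas2 (F : ℝ → ℝ) (hF : Measurable F) (s : ℝ) :
    Measurable (fun x : ℝ => (1-x) ^ (2*β) * F ((1-s) / (1-x))) := by
  fun_prop

lemma Mnonneg {F : ℝ → ℝ} {M : ℝ} (hb : ∀ t ∈ Set.Icc (0:ℝ) 1, |F t| ≤ M) : 0 ≤ M :=
  (abs_nonneg _).trans (hb 0 ⟨le_refl 0, zero_le_one⟩)

lemma ptbd1 {F : ℝ → ℝ} {M : ℝ} (hb : ∀ t ∈ Set.Icc (0:ℝ) 1, |F t| ≤ M)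
    {s : ℝ} (hs : s ∈ Set.Icc (0:ℝ) 1) {x : ℝ} (hx : x ∈ Set.Icc s 1) :
    |x ^ (2*β) * F (s / x)| ≤ M * x ^ (2*β) := by
  rcases eq_or_lt_of_le (hs.1.trans hx.1) with h0 | h0
  · rw [← h0, Real.zero_rpow (ne_of_gt (by linarith [beta_pos]) : (2*β) ≠ 0)]
    simp
  · have harg : s / x ∈ Set.Icc (0:ℝ) 1 :=
      ⟨div_nonneg hs.1 h0.le, (div_le_one h0).mpr hx.1⟩
    rw [abs_mul, abs_of_nonneg (Real.rpow_nonneg h0.le _)]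
    rw [mul_comm (M : ℝ) _]
    exact mul_le_mul_of_nonneg_left (hb _ harg) (Real.rpow_nonneg h0.le _)

lemma ptbd1' {F : ℝ → ℝ} {M : ℝ} (hb : ∀ t ∈ Set.Icc (0:ℝ) 1, |F t| ≤ M)
    {s : ℝ} (hs : s ∈ Set.Icc (0:ℝ) 1) {x : ℝ} (hx : x ∈ Set.Icc s 1) :
    |x ^ (2*β) * F (s / x)| ≤ M := by
  refine (ptbd1 hb hs hx).trans ?_
  have hx0 : 0 ≤ x := hs.1.trans hx.1
  have : x ^ (2*β) ≤ 1 := Real.rpow_le_one hx0 hx.2 (by linarith [beta_pos])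
  nlinarith [Mnonneg hb, Real.rpow_nonneg hx0 (2*β)]

lemma integrable1 (F : ℝ → ℝ) (hF : Measurable F) {M : ℝ}
    (hb : ∀ t ∈ Set.Icc (0:ℝ) 1, |F t| ≤ M) {s : ℝ} (hs : s ∈ Set.Icc (0:ℝ) 1) :
    IntervalIntegrable (fun x => x ^ (2*β) * F (s / x)) volume s 1 :=
  intInt_of_bdd (meas1 F hF s)
    (fun x hx => ptbd1' hb hs (by rwa [Set.uIcc_of_le hs.2] at hx))

lemma integrable2 (F : ℝ → ℝ) (hF : Measurable F) {M : ℝ}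
    (hb : ∀ t ∈ Set.Icc (0:ℝ) 1, |F t| ≤ M) {s : ℝ} (hs : s ∈ Set.Icc (0:ℝ) 1) :
    IntervalIntegrable (fun x => (1-x) ^ (2*β) * F ((1-s) / (1-x))) volume 0 s := by
  apply intInt_of_bdd (meas2 F hF s)
  intro x hx
  rw [Set.uIcc_of_le hs.1] at hx
  exact ptbd1' hb ⟨by linarith [hs.2], by linarith [hs.1]⟩
    (⟨by linarith [hx.2], by linarith [hx.1]⟩ : (1-x) ∈ Set.Icc (1-s) 1)

/-- the contraction bound for the first integral -/
lemma bound1 {F : ℝ → ℝ} (hF : Measurable F) {M : ℝ}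
    (hb : ∀ t ∈ Set.Icc (0:ℝ) 1, |F t| ≤ M) {s : ℝ} (hs : s ∈ Set.Icc (0:ℝ) 1) :
    |∫ x in s..1, x ^ (2*β) * F (s / x)| ≤ M / (2*β+1) := by
  have hM0 : 0 ≤ M := Mnonneg hb
  have hint : IntervalIntegrable (fun x => x ^ (2*β) * F (s / x)) volume s 1 :=
    integrable1 F hF hb hs
  have hintb : IntervalIntegrable (fun x => M * x ^ (2*β)) volume s 1 :=
    (intervalIntegral.intervalIntegrable_rpow (Or.inl (by linarith [beta_pos]))).const_mul M
  calc |∫ x in s..1, x ^ (2*β) * F (s / x)|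
      ≤ ∫ x in s..1, |x ^ (2*β) * F (s / x)| :=
        intervalIntegral.abs_integral_le_integral_abs hs.2
    _ ≤ ∫ x in s..1, M * x ^ (2*β) :=
        intervalIntegral.integral_mono_on hs.2 hint.abs hintb
          (fun x hx => ptbd1 hb hs hx)
    _ = M * ((1 - s ^ (2*β+1)) / (2*β+1)) := by
        rw [intervalIntegral.integral_const_mul,
          integral_rpow (Or.inl (by linarith [beta_pos]))]
        rw [Real.one_rpow]
    _ ≤ M / (2*β+1) := by
        rw [mul_div_assoc']
        gcongr <;> nlinarith [Real.rpow_nonneg hs.1 (2*β+1), beta_pos]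

/-- the contraction bound for the second integral -/
lemma bound2 {F : ℝ → ℝ} (hF : Measurable F) {M : ℝ}
    (hb : ∀ t ∈ Set.Icc (0:ℝ) 1, |F t| ≤ M) {s : ℝ} (hs : s ∈ Set.Icc (0:ℝ) 1) :
    |∫ x in (0:ℝ)..s, (1-x) ^ (2*β) * F ((1-s) / (1-x))| ≤ M / (2*β+1) := by
  have hsub := subst2 (fun y => y ^ (2*β) * F ((1-s) / y)) s
  rw [hsub]
  exact bound1 hF hb ⟨by linarith [hs.2], by linarith [hs.1]⟩

/-- the second model integral, via substitution -/
lemma int2 (s : ℝ) (hs : s ∈ Set.Icc (0:ℝ) 1) :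
    ∫ x in (0:ℝ)..s, (1-x) ^ (2*β) * (((1-s)/(1-x)) * (1 - (1-s)/(1-x))) ^ β
      = (1-s) ^ β * (s ^ (β+1) / (β+1)) := by
  have hsub := subst2 (fun y => y ^ (2*β) * (((1-s)/y) * (1 - (1-s)/y)) ^ β) s
  rw [hsub]
  have := int1 (1-s) ⟨by linarith [hs.2], by linarith [hs.1]⟩
  simpa using this

/-- `K` fixes `c₂ (s(1-s))^β`. -/
lemma Kphi (s : ℝ) (hs : s ∈ Set.Icc (0:ℝ) 1) :
    K (fun t => c₂ * (t * (1 - t)) ^ β) s = c₂ * (s * (1 - s)) ^ β := by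
  have hI1 : (∫ x in s..1, x ^ (2*β) * (c₂ * ((s/x) * (1 - s/x)) ^ β))
      = c₂ * (s ^ β * ((1-s) ^ (β+1) / (β+1))) := by
    rw [show (fun x => x ^ (2*β) * (c₂ * ((s/x) * (1 - s/x)) ^ β))
        = fun x => c₂ * (x ^ (2*β) * ((s/x) * (1 - s/x)) ^ β) by funext x; ring]
    rw [intervalIntegral.integral_const_mul, int1 s hs]
  have hI2 : (∫ x in (0:ℝ)..s, (1-x) ^ (2*β) *
        (c₂ * (((1-s)/(1-x)) * (1 - (1-s)/(1-x))) ^ β))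
      = c₂ * ((1-s) ^ β * (s ^ (β+1) / (β+1))) := by
    rw [show (fun x => (1-x) ^ (2*β) * (c₂ * (((1-s)/(1-x)) * (1 - (1-s)/(1-x))) ^ β))
        = fun x => c₂ * ((1-x) ^ (2*β) * (((1-s)/(1-x)) * (1 - (1-s)/(1-x))) ^ β) by
          funext x; ring]
    rw [intervalIntegral.integral_const_mul, int2 s hs]
  rw [K, hI1, hI2, h_sq s hs]
  rw [rpow_succ hs.1, rpow_succ (by linarith [hs.2] : (0:ℝ) ≤ 1 - s),
    Real.mul_rpow hs.1 (by linarith [hs.2])]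
  linear_combination (s ^ β * (1-s) ^ β) * fixed_const

/-- difference representation: `K` is affine, so differences satisfy the linear equation -/
lemma Kdiff (f1 f2 : ℝ → ℝ) (h1 : Measurable f1) (h2 : Measurable f2)
    {M1 M2 : ℝ} (hb1 : ∀ t ∈ Set.Icc (0:ℝ) 1, |f1 t| ≤ M1)
    (hb2 : ∀ t ∈ Set.Icc (0:ℝ) 1, |f2 t| ≤ M2)
    {s : ℝ} (hs : s ∈ Set.Icc (0:ℝ) 1) :
    K f1 s - K f2 s = (2 / (2*β+1)) *
      ((∫ x in s..1, x ^ (2*β) * (f1 (s/x) - f2 (s/x))) +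
        ∫ x in (0:ℝ)..s, (1-x) ^ (2*β) * (f1 ((1-s)/(1-x)) - f2 ((1-s)/(1-x)))) := by
  have e1 : (∫ x in s..1, x ^ (2*β) * (f1 (s/x) - f2 (s/x)))
      = (∫ x in s..1, x ^ (2*β) * f1 (s/x)) - ∫ x in s..1, x ^ (2*β) * f2 (s/x) := by
    rw [← intervalIntegral.integral_sub (integrable1 f1 h1 hb1 hs)
      (integrable1 f2 h2 hb2 hs)]
    congr 1; funext x; ring
  have e2 : (∫ x in (0:ℝ)..s, (1-x) ^ (2*β) * (f1 ((1-s)/(1-x)) - f2 ((1-s)/(1-x))))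
      = (∫ x in (0:ℝ)..s, (1-x) ^ (2*β) * f1 ((1-s)/(1-x)))
        - ∫ x in (0:ℝ)..s, (1-x) ^ (2*β) * f2 ((1-s)/(1-x)) := by
    rw [← intervalIntegral.integral_sub (integrable2 f1 h1 hb1 hs)
      (integrable2 f2 h2 hb2 hs)]
    congr 1; funext x; ring
  rw [e1, e2, K, K]
  ring

/-- Uniqueness: any bounded measurable solution of `K f = f` on `[0,1]` equals
`s ↦ c₂ (s(1-s))^β` there. -/
theorem second_moment_fixed_point_unique (f : ℝ → ℝ) (hf : Measurable f)
    (hfb : ∃ M, ∀ t ∈ Set.Icc (0 : ℝ) 1, |f t| ≤ M)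
    (hfix : ∀ s ∈ Set.Icc (0 : ℝ) 1, K f s = f s) :
    ∀ s ∈ Set.Icc (0 : ℝ) 1, f s = c₂ * (s * (1 - s)) ^ β := by
  obtain ⟨Mf, hMf⟩ := hfb
  set φ : ℝ → ℝ := fun t => c₂ * (t * (1 - t)) ^ β with hφ
  have hφmeas : Measurable φ := by fun_prop
  have hφbd : ∀ t ∈ Set.Icc (0:ℝ) 1, |φ t| ≤ |c₂| := by
    intro t ht
    rw [hφ, abs_mul]
    have h0 : 0 ≤ t * (1-t) := mul_nonneg ht.1 (by linarith [ht.2])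
    have h1 : (t * (1-t)) ^ β ≤ 1 :=
      Real.rpow_le_one h0 (by nlinarith [ht.1, ht.2]) beta_pos.le
    have h2 : |(t * (1-t)) ^ β| = (t * (1-t)) ^ β := abs_of_nonneg (Real.rpow_nonneg h0 _)
    nlinarith [abs_nonneg c₂, Real.rpow_nonneg h0 β]
  set g : ℝ → ℝ := fun t => f t - φ t with hg
  have hgmeas : Measurable g := hf.sub hφmeas
  have hgbd : ∀ t ∈ Set.Icc (0:ℝ) 1, |g t| ≤ Mf + |c₂| := fun t ht =>
    (abs_sub (f t) (φ t)).trans (add_le_add (hMf t ht) (hφbd t ht))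
  -- the sup of |g| on [0,1]
  set S : Set ℝ := (fun t => |g t|) '' Set.Icc 0 1 with hS
  have hne : S.Nonempty := ⟨|g 0|, 0, ⟨le_refl 0, zero_le_one⟩, rfl⟩
  have hbdd : BddAbove S := by
    refine ⟨Mf + |c₂|, ?_⟩
    rintro _ ⟨t, ht, rfl⟩
    exact hgbd t ht
  set A := sSup S with hA
  have hAle : ∀ t ∈ Set.Icc (0:ℝ) 1, |g t| ≤ A := fun t ht =>
    le_csSup hbdd ⟨t, ht, rfl⟩
  have hA0 : 0 ≤ A := (abs_nonneg _).trans (hAle 0 ⟨le_refl 0, zero_le_one⟩)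
  -- the linear equation for g and contraction
  have hcontr : ∀ s ∈ Set.Icc (0:ℝ) 1, |g s| ≤ 4 / (2*β+1)^2 * A := by
    intro s hs
    have hrep : g s = (2 / (2*β+1)) *
        ((∫ x in s..1, x ^ (2*β) * g (s/x)) +
          ∫ x in (0:ℝ)..s, (1-x) ^ (2*β) * g ((1-s)/(1-x))) := by
      have := Kdiff f φ hf hφmeas hMf hφbd hs
      rw [hfix s hs, Kphi s hs] at this
      exact this
    rw [hrep, abs_mul, abs_of_pos (div_pos two_pos tb_pos)]
    calc (2 / (2*β+1)) * |(∫ x in s..1, x ^ (2*β) * g (s/x)) +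
          ∫ x in (0:ℝ)..s, (1-x) ^ (2*β) * g ((1-s)/(1-x))|
        ≤ (2 / (2*β+1)) * (|∫ x in s..1, x ^ (2*β) * g (s/x)| +
            |∫ x in (0:ℝ)..s, (1-x) ^ (2*β) * g ((1-s)/(1-x))|) :=
          mul_le_mul_of_nonneg_left (abs_add_le _ _) (div_pos two_pos tb_pos).le
      _ ≤ (2 / (2*β+1)) * (A / (2*β+1) + A / (2*β+1)) :=
          mul_le_mul_of_nonneg_left
            (add_le_add (bound1 hgmeas hAle hs) (bound2 hgmeas hAle hs))
            (div_pos two_pos tb_pos).le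
      _ = 4 / (2*β+1)^2 * A := by
          field_simp
          ring
  -- conclude `A = 0`
  have hAq : A ≤ 4 / (2*β+1)^2 * A := by
    apply csSup_le hne
    rintro _ ⟨t, ht, rfl⟩
    exact hcontr t ht
  have hq : 4 / (2*β+1)^2 < 1 := by
    rw [div_lt_one (by nlinarith [tb_pos] : (0:ℝ) < (2*β+1)^2)]
    nlinarith [tb_gt]
  have hA0' : A ≤ 0 := by nlinarith
  intro s hs
  have : |g s| ≤ 0 := (hAle s hs).trans hA0'
  have hgz : g s = 0 := abs_eq_zero.mp (le_antisymm this (abs_nonneg _))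
  have : f s - φ s = 0 := hgz
  simp only [hφ] at this
  linarith
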